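/- Let e ≤ n be natural numbers and set C_{e,n} := √(1 − 1/binom(n,e)). Then for every e-dimensional linear subspace V of ℝ^n there exists a coordinate subspace V_I (spanned by standard basis vectors e_i, i ∈ I, with |I| = e) such that δ(V, V_I) ≤ C_{e,n}, where δ(V,W) := ‖π_V − π_W‖ is the operator-norm distance between orthogonal projections. -/

import Mathlib

open MeasureTheory Set ENNReal
open Matrix
open scoped RealInnerProductSpace
noncomputable section

abbrev E (n : ℕ) := EuclideanSpace ℝ (Fin n)

def projL {n : ℕ} (V : Submodule ℝ (E n)) : E n →L[ℝ] E n :=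
  V.subtypeL.comp (Submodule.orthogonalProjection V)

/-- δ(V,W) := ‖π_V − π_W‖ (operator norm). -/
def delta {n : ℕ} (V W : Submodule ℝ (E n)) : ℝ := ‖projL V - projL W‖

/-- The coordinate subspace spanned by the standard basis vectors indexed by I. -/
def coordSubspace {n : ℕ} (I : Finset (Fin n)) : Submodule ℝ (E n) :=
  Submodule.span ℝ ((fun i => EuclideanSpace.single i (1 : ℝ)) '' ↑I)

open Finset in
/-- The square submatrix of an n×e matrix given by the rows in I. -/
def subM {n e : ℕ} (M : Matrix (Fin n) (Fin e) ℝ) (I : Finset (Fin n)) (h : I.card = e) :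
    Matrix (Fin e) (Fin e) ℝ := fun j k => M (I.orderEmbOfFin h j) k

open Finset in
theorem cauchyBinet {n e : ℕ} (M : Matrix (Fin n) (Fin e) ℝ) :
    (Mᵀ * M).det = ∑ I ∈ (Finset.powersetCard e (univ : Finset (Fin n))).attach,
      (subM M I.1 ((Finset.mem_powersetCard.mp I.2).2)).det ^ 2 := by
  classical
  set d := (Matrix.detRowAlternating : ((Fin e) → ℝ) [⋀^(Fin e)]→ₗ[ℝ] ℝ) with hd
  set T : (Fin e → Fin n) → ℝ :=
    fun r => (∏ j, M (r j) j) * (M.submatrix r id).det with hT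
  -- Step 1 : expand the determinant by multilinearity
  have step1 : (Mᵀ * M).det = ∑ r : Fin e → Fin n, T r := by
    have hrows : (Mᵀ * M) = fun j => ∑ i : Fin n, M i j • (fun k => M i k) := by
      funext j k
      simp [Matrix.mul_apply, Finset.sum_apply]
    calc (Mᵀ * M).det = d (Mᵀ * M) := rfl
    _ = d (fun j => ∑ i : Fin n, M i j • (fun k => M i k)) := by rw [hrows]
    _ = ∑ r : Fin e → Fin n, d (fun j => M (r j) j • (fun k => M (r j) k)) :=
        d.toMultilinearMap.map_sum (fun j i => M i j • (fun k => M i k))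
    _ = ∑ r : Fin e → Fin n, T r := by
        refine Finset.sum_congr rfl (fun r _ => ?_)
        have h1 := d.toMultilinearMap.map_smul_univ (fun j => M (r j) j)
          (fun j => (fun k => M (r j) k))
        exact h1.trans ((smul_eq_mul _ _).trans rfl)
  -- Step 2 : non-injective terms vanish
  have step2 : ∑ r : Fin e → Fin n, T r
      = ∑ r ∈ univ.filter (fun r : Fin e → Fin n => Function.Injective r), T r := by
    symm
    apply Finset.sum_subset (Finset.filter_subset _ _)
    intro r _ hr
    have hninj : ¬ Function.Injective r := by
      intro h; exact hr (Finset.mem_filter.mpr ⟨Finset.mem_univ _, h⟩)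
    have hv : ¬ Function.Injective (fun j => (fun k => M (r j) k)) := by
      obtain ⟨j1, j2, heq, hne⟩ := Function.not_injective_iff.mp hninj
      exact Function.not_injective_iff.mpr ⟨j1, j2, by rw [heq], hne⟩
    have : (M.submatrix r id).det = 0 := d.map_eq_zero_of_not_injective _ hv
    rw [hT]
    simp [this]
  -- Step 3 : reindex injective maps by (subset, permutation)
  have step3 : ∑ r ∈ univ.filter (fun r : Fin e → Fin n => Function.Injective r), T r
      = ∑ p ∈ ((Finset.powersetCard e (univ : Finset (Fin n))).attach ×ˢ
          (univ : Finset (Equiv.Perm (Fin e)))),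
        T (fun j => p.1.1.orderEmbOfFin ((Finset.mem_powersetCard.mp p.1.2).2) (p.2 j)) := by
    have himg : ∀ (I : Finset (Fin n)) (hI : I.card = e) (σ : Equiv.Perm (Fin e)),
        Finset.image (fun j => I.orderEmbOfFin hI (σ j)) univ = I := by
      intro I hI σ
      ext a
      simp only [Finset.mem_image, Finset.mem_univ, true_and]
      constructor
      · rintro ⟨j, rfl⟩; exact I.orderEmbOfFin_mem hI _
      · intro ha
        have : a ∈ Set.range (I.orderEmbOfFin hI) := by
          rw [I.range_orderEmbOfFin hI]; exact ha
        obtain ⟨j, hj⟩ := this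
        exact ⟨σ.symm j, by simp [hj]⟩
    symm
    refine Finset.sum_bij
      (i := fun p _ => fun j => p.1.1.orderEmbOfFin ((Finset.mem_powersetCard.mp p.1.2).2) (p.2 j))
      ?_ ?_ ?_ ?_
    · intro p _
      refine Finset.mem_filter.mpr ⟨Finset.mem_univ _, ?_⟩
      exact (p.1.1.orderEmbOfFin _).injective.comp p.2.injective
    · intro p1 h1 p2 h2 hfe
      obtain ⟨⟨I, hI⟩, σ⟩ := p1
      obtain ⟨⟨J, hJ⟩, τ⟩ := p2
      have hIJ : I = J := by
        have h1 := himg I ((Finset.mem_powersetCard.mp hI).2) σ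
        have h2 := himg J ((Finset.mem_powersetCard.mp hJ).2) τ
        rw [← h1, ← h2]
        exact congrArg (fun f => Finset.image f univ) hfe
      subst hIJ
      have hστ : σ = τ := by
        apply Equiv.ext
        intro j
        exact (I.orderEmbOfFin _).injective (congrFun hfe j)
      exact Prod.ext (Subtype.ext rfl) hστ
    · intro r hr
      have hinj := (Finset.mem_filter.mp hr).2
      have hcard : (Finset.image r univ).card = e := by
        rw [Finset.card_image_of_injective _ hinj, Finset.card_univ, Fintype.card_fin]
      have hmem : Finset.image r univ ∈ Finset.powersetCard e (univ : Finset (Fin n)) :=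
        Finset.mem_powersetCard.mpr ⟨Finset.subset_univ _, hcard⟩
      set I := Finset.image r univ with hIdef
      have hrj : ∀ j, r j ∈ I := fun j => Finset.mem_image_of_mem r (Finset.mem_univ j)
      have hσ0 : Function.Injective
          (fun j => (I.orderIsoOfFin hcard).symm ⟨r j, hrj j⟩) := by
        intro a b hab
        have h2 : r a = r b := by
          have := congrArg (fun z => ((I.orderIsoOfFin hcard) z : Fin n)) hab
          simpa using this
        exact hinj h2
      refine ⟨⟨⟨I, hmem⟩, Equiv.ofBijective _ (Finite.injective_iff_bijective.mp hσ0)⟩,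
        Finset.mem_product.mpr ⟨Finset.mem_attach _ _, Finset.mem_univ _⟩, ?_⟩
      funext j
      show I.orderEmbOfFin _ ((I.orderIsoOfFin hcard).symm ⟨r j, hrj j⟩) = r j
      rw [← Finset.coe_orderIsoOfFin_apply]
      simp
    · intro p _
      rfl
  -- Step 4 : per-subset sum over permutations
  have step4 : ∑ p ∈ ((Finset.powersetCard e (univ : Finset (Fin n))).attach ×ˢ
          (univ : Finset (Equiv.Perm (Fin e)))),
        T (fun j => p.1.1.orderEmbOfFin ((Finset.mem_powersetCard.mp p.1.2).2) (p.2 j))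
      = ∑ I ∈ (Finset.powersetCard e (univ : Finset (Fin n))).attach,
          (subM M I.1 ((Finset.mem_powersetCard.mp I.2).2)).det ^ 2 := by
    rw [Finset.sum_product]
    refine Finset.sum_congr rfl (fun I _ => ?_)
    set hIc := (Finset.mem_powersetCard.mp I.2).2 with hIcdef
    set N := subM M I.1 hIc with hN
    have hterm : ∀ σ : Equiv.Perm (Fin e),
        T (fun j => I.1.orderEmbOfFin hIc (σ j))
          = ((Equiv.Perm.sign σ : ℤ) : ℝ) * (∏ j, N (σ j) j) * N.det := by
      intro σ
      have hsub : M.submatrix (fun j => I.1.orderEmbOfFin hIc (σ j)) id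
          = N.submatrix σ id := rfl
      have hperm : (N.submatrix σ id).det = Equiv.Perm.sign σ * N.det :=
        Matrix.det_permute σ N
      have hprod : (∏ j, M (I.1.orderEmbOfFin hIc (σ j)) j) = ∏ j, N (σ j) j := rfl
      rw [hT]
      show (∏ j, M (I.1.orderEmbOfFin hIc (σ j)) j)
          * (M.submatrix (fun j => I.1.orderEmbOfFin hIc (σ j)) id).det = _
      rw [hsub, hperm, hprod]
      ring
    calc ∑ σ : Equiv.Perm (Fin e), T (fun j => I.1.orderEmbOfFin hIc (σ j))
        = ∑ σ : Equiv.Perm (Fin e), ((Equiv.Perm.sign σ : ℤ) : ℝ) * (∏ j, N (σ j) j) * N.det :=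
          Finset.sum_congr rfl (fun σ _ => hterm σ)
    _ = (∑ σ : Equiv.Perm (Fin e), ((Equiv.Perm.sign σ : ℤ) : ℝ) * ∏ j, N (σ j) j) * N.det := by
          rw [Finset.sum_mul]
    _ = N.det * N.det := by rw [← Matrix.det_apply' N]
    _ = N.det ^ 2 := (pow_two _).symm
  rw [step1, step2, step3, step4]

theorem contraction_det_bound {e : ℕ} (A : Matrix (Fin e) (Fin e) ℝ)
    (hc : ∀ x : Fin e → ℝ, ∑ i, (A.mulVec x i) ^ 2 ≤ ∑ i, (x i) ^ 2) :
    ∀ x : Fin e → ℝ, A.det ^ 2 * ∑ i, (x i) ^ 2 ≤ ∑ i, (A.mulVec x i) ^ 2 := by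
  classical
  have hS : (Aᵀ * A).IsHermitian := by
    have h := Matrix.isHermitian_conjTranspose_mul_self A
    simpa using h
  set S := Aᵀ * A with hSdef
  have ip : ∀ u v : EuclideanSpace ℝ (Fin e), ⟪u, v⟫ = ∑ i, u i * v i := by
    intro u v
    simp [PiLp.inner_apply, mul_comm]
  -- quadratic form identity
  have quad : ∀ x : EuclideanSpace ℝ (Fin e), ⟪x, WithLp.toLp 2 (S.mulVec x)⟫
      = ∑ i, (A.mulVec x i) ^ 2 := by
    intro x
    rw [ip]
    have h1 : S.mulVec x = Aᵀ.mulVec (A.mulVec x) := by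
      rw [Matrix.mulVec_mulVec]
    rw [h1]
    simp only [WithLp.ofLp_toLp]
    have h2 : ∑ i, x i * Aᵀ.mulVec (A.mulVec x) i
        = dotProduct x (Aᵀ.mulVec (A.mulVec x)) := rfl
    rw [h2, Matrix.dotProduct_mulVec, Matrix.vecMul_transpose]
    simp [dotProduct, pow_two]
  set b := hS.eigenvectorBasis with hb
  set μ := hS.eigenvalues with hμ
  have hsym := (Matrix.isHermitian_iff_isSymmetric).1 hS
  have hmv : ∀ j, WithLp.toLp 2 (S.mulVec (b j)) = μ j • (b j : EuclideanSpace ℝ (Fin e)) :=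
    fun j => by rw [hS.mulVec_eigenvectorBasis j]; rfl
  have hb1 : ∀ j, ‖b j‖ = 1 := fun j => b.orthonormal.1 j
  -- eigenvalues in [0,1]
  have hμ01 : ∀ j, 0 ≤ μ j ∧ μ j ≤ 1 := by
    intro j
    have h1 : ⟪(b j : EuclideanSpace ℝ (Fin e)), WithLp.toLp 2 (S.mulVec (b j))⟫
        = μ j := by
      rw [hmv j, real_inner_smul_right, real_inner_self_eq_norm_sq, hb1, one_pow, mul_one]
    have h2 := quad (b j)
    have h3 : ∑ i, ((b j : EuclideanSpace ℝ (Fin e)) i) ^ 2 = 1 := by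
      have := real_inner_self_eq_norm_sq (b j : EuclideanSpace ℝ (Fin e))
      rw [ip] at this
      simp only [hb1, one_pow] at this
      rw [← this]
      exact Finset.sum_congr rfl (fun i _ => pow_two _)
    constructor
    · rw [← h1, h2]
      positivity
    · rw [← h1, h2]
      calc ∑ i, (A.mulVec (b j) i) ^ 2 ≤ ∑ i, ((b j : EuclideanSpace ℝ (Fin e)) i) ^ 2 :=
            hc (b j)
      _ = 1 := h3
  -- determinant = product of eigenvalues
  have hdet : A.det ^ 2 = ∏ j, μ j := by
    have h := hS.det_eq_prod_eigenvalues
    have : S.det = A.det ^ 2 := by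
      rw [hSdef, Matrix.det_mul, Matrix.det_transpose, pow_two]
    rw [this] at h
    exact_mod_cast h
  have hmin : ∀ j, A.det ^ 2 ≤ μ j := by
    intro j
    rw [hdet]
    have h1 : μ j * ∏ i ∈ Finset.univ.erase j, μ i = ∏ i, μ i :=
      Finset.mul_prod_erase Finset.univ μ (Finset.mem_univ j)
    have h2 : ∏ i ∈ Finset.univ.erase j, μ i ≤ 1 :=
      Finset.prod_le_one (fun i _ => (hμ01 i).1) (fun i _ => (hμ01 i).2)
    have h3 : 0 ≤ μ j := (hμ01 j).1
    calc ∏ i, μ i = μ j * ∏ i ∈ Finset.univ.erase j, μ i := h1.symm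
    _ ≤ μ j * 1 := mul_le_mul_of_nonneg_left h2 h3
    _ = μ j := mul_one _
  -- main computation
  intro x
  set x' : EuclideanSpace ℝ (Fin e) := WithLp.toLp 2 x with hx'
  have hexp : ∀ y : EuclideanSpace ℝ (Fin e),
      ⟪x', y⟫ = ∑ j, ⟪x', (b j : EuclideanSpace ℝ (Fin e))⟫ * ⟪(b j : EuclideanSpace ℝ (Fin e)), y⟫ :=
    fun y => (b.sum_inner_mul_inner x' y).symm
  have hSx : ∀ j, ⟪(b j : EuclideanSpace ℝ (Fin e)), WithLp.toLp 2 (S.mulVec x')⟫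
      = μ j * ⟪(b j : EuclideanSpace ℝ (Fin e)), x'⟫ := by
    intro j
    have h1 : WithLp.toLp 2 (S.mulVec x') = Matrix.toEuclideanLin S x' := rfl
    have h2 : WithLp.toLp 2 (S.mulVec (b j)) = Matrix.toEuclideanLin S (b j) := rfl
    rw [h1, ← hsym (b j) x', ← h2, hmv j]
    exact real_inner_smul_left _ _ _
  have hparse : ⟪x', WithLp.toLp 2 (S.mulVec x')⟫
      = ∑ j, μ j * ⟪(b j : EuclideanSpace ℝ (Fin e)), x'⟫ ^ 2 := by
    rw [hexp]
    refine Finset.sum_congr rfl (fun j _ => ?_)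
    rw [hSx j, real_inner_comm x' (b j : EuclideanSpace ℝ (Fin e))]
    ring
  have hxnorm : ∑ i, (x i) ^ 2 = ∑ j, ⟪(b j : EuclideanSpace ℝ (Fin e)), x'⟫ ^ 2 := by
    have h1 := hexp x'
    rw [ip] at h1
    have h2 : ∑ i, x' i * x' i = ∑ i, (x i) ^ 2 :=
      Finset.sum_congr rfl (fun i _ => (pow_two _).symm)
    rw [h2] at h1
    rw [h1]
    refine Finset.sum_congr rfl (fun j _ => ?_)
    rw [real_inner_comm x' (b j : EuclideanSpace ℝ (Fin e))]
    ring
  calc A.det ^ 2 * ∑ i, (x i) ^ 2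
      = ∑ j, A.det ^ 2 * ⟪(b j : EuclideanSpace ℝ (Fin e)), x'⟫ ^ 2 := by
        rw [hxnorm, Finset.mul_sum]
  _ ≤ ∑ j, μ j * ⟪(b j : EuclideanSpace ℝ (Fin e)), x'⟫ ^ 2 :=
        Finset.sum_le_sum (fun j _ => mul_le_mul_of_nonneg_right (hmin j) (sq_nonneg _))
  _ = ⟪x', WithLp.toLp 2 (S.mulVec x')⟫ := hparse.symm
  _ = ∑ i, (A.mulVec x i) ^ 2 := quad x'

theorem proj_lower_bound {n : ℕ} (V W : Submodule ℝ (E n)) (c : ℝ) (hc1 : c ≤ 1)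
    (hVW : ∀ v ∈ V, c * ‖v‖ ^ 2 ≤ ‖projL W v‖ ^ 2)
    (hWV : ∀ w ∈ W, c * ‖w‖ ^ 2 ≤ ‖projL V w‖ ^ 2) :
    delta V W ≤ Real.sqrt (1 - c) := by
  set P := projL V with hP
  set Q := projL W with hQ
  have hPmem : ∀ x, P x ∈ V := fun x => (Submodule.orthogonalProjection V x).2
  have hQmem : ∀ x, Q x ∈ W := fun x => (Submodule.orthogonalProjection W x).2
  have hPfix : ∀ x ∈ V, P x = x := fun x hx => Submodule.starProjection_eq_self_iff.mpr hx
  have hQfix : ∀ x ∈ W, Q x = x := fun x hx => Submodule.starProjection_eq_self_iff.mpr hx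
  have hPsa : ∀ u v : E n, ⟪P u, v⟫ = ⟪u, P v⟫ := fun u v =>
    Submodule.inner_starProjection_left_eq_right V u v
  have hQsa : ∀ u v : E n, ⟪Q u, v⟫ = ⟪u, Q v⟫ := fun u v =>
    Submodule.inner_starProjection_left_eq_right W u v
  have pyth : ∀ (U : Submodule ℝ (E n)) (x : E n),
      ‖x - projL U x‖ ^ 2 = ‖x‖ ^ 2 - ‖projL U x‖ ^ 2 := by
    intro U x
    have h0 : ⟪x - projL U x, projL U x⟫ = 0 :=
      Submodule.starProjection_inner_eq_zero x _ (Submodule.orthogonalProjection U x).2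
    have h1 : ‖x‖ ^ 2 = ‖(x - projL U x) + projL U x‖ ^ 2 := by rw [sub_add_cancel]
    rw [norm_add_sq_real, h0] at h1
    linarith
  have key : ∀ x : E n, ‖(P - Q) x‖ ^ 2 ≤ (1 - c) * ‖x‖ ^ 2 := by
    intro x
    set y := x - Q x with hy
    have hQy : Q y = 0 := by
      rw [hy, map_sub, hQfix _ (hQmem x), sub_self]
    -- Step A : ‖P y‖² ≤ (1-c) ‖y‖²
    have hA : ‖P y‖ ^ 2 ≤ (1 - c) * ‖y‖ ^ 2 := by
      have h1 : ‖P y - Q (P y)‖ ^ 2 ≤ (1 - c) * ‖P y‖ ^ 2 := by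
        have hp := pyth W (P y)
        have h2 := hVW (P y) (hPmem y)
        linarith
      have h3 : ‖P y‖ ^ 2 ≤ ‖y‖ * ‖P y - Q (P y)‖ := by
        have e1 : ‖P y‖ ^ 2 = ⟪y, P y⟫ := by
          rw [← real_inner_self_eq_norm_sq, ← hPsa, hPfix _ (hPmem y), real_inner_comm]
        have e2 : ⟪y, Q (P y)⟫ = 0 := by rw [← hQsa, hQy, inner_zero_left]
        have e3 : ⟪y, P y⟫ = ⟪y, P y - Q (P y)⟫ := by
          rw [inner_sub_right, e2, sub_zero]
        rw [e1, e3]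
        exact real_inner_le_norm _ _
      by_cases hz : ‖P y‖ = 0
      · have : (0:ℝ) ≤ (1 - c) * ‖y‖ ^ 2 := mul_nonneg (by linarith) (sq_nonneg _)
        simpa [hz] using this
      · have hpos : 0 < ‖P y‖ := lt_of_le_of_ne (norm_nonneg _) (Ne.symm hz)
        have h4 : ‖P y‖ ^ 2 * ‖P y‖ ^ 2 ≤ (‖y‖ * ‖P y - Q (P y)‖) * (‖y‖ * ‖P y - Q (P y)‖) :=
          mul_le_mul h3 h3 (sq_nonneg ‖P y‖) (mul_nonneg (norm_nonneg y) (norm_nonneg _))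
        have h5 : ‖y‖ ^ 2 * ‖P y - Q (P y)‖ ^ 2 ≤ ‖y‖ ^ 2 * ((1 - c) * ‖P y‖ ^ 2) :=
          mul_le_mul_of_nonneg_left h1 (sq_nonneg ‖y‖)
        have h6 : ‖P y‖ ^ 2 * ‖P y‖ ^ 2 ≤ ((1 - c) * ‖y‖ ^ 2) * ‖P y‖ ^ 2 := by nlinarith
        exact le_of_mul_le_mul_right h6 (by positivity)
    -- Step B : ‖Q x - P (Q x)‖² ≤ (1-c) ‖Q x‖²
    have hB : ‖Q x - P (Q x)‖ ^ 2 ≤ (1 - c) * ‖Q x‖ ^ 2 := by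
      have hp := pyth V (Q x)
      have h2 := hWV (Q x) (hQmem x)
      linarith
    -- decomposition
    have hdec : (P - Q) x = P y - (Q x - P (Q x)) := by
      simp only [ContinuousLinearMap.sub_apply, hy, map_sub]
      abel
    have horthmem : Q x - P (Q x) ∈ Vᗮ := Submodule.sub_starProjection_mem_orthogonal (Q x)
    have horth : ⟪P y, Q x - P (Q x)⟫ = 0 :=
      (Submodule.mem_orthogonal _ _).1 horthmem _ (hPmem y)
    have hnorm : ‖(P - Q) x‖ ^ 2 = ‖P y‖ ^ 2 + ‖Q x - P (Q x)‖ ^ 2 := by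
      rw [hdec, norm_sub_sq_real, horth]
      ring
    have hx2 : ‖y‖ ^ 2 = ‖x‖ ^ 2 - ‖Q x‖ ^ 2 := by
      have := pyth W x
      rw [← hQ] at this
      exact this
    have hq2 : ‖Q x‖ ^ 2 ≤ ‖x‖ ^ 2 := by nlinarith [sq_nonneg ‖y‖, hx2]
    nlinarith [hA, hB, hnorm, hx2]
  rw [delta]
  refine ContinuousLinearMap.opNorm_le_bound _ (Real.sqrt_nonneg _) (fun x => ?_)
  have hk := key x
  calc ‖(projL V - projL W) x‖ = Real.sqrt (‖(P - Q) x‖ ^ 2) := by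
        rw [Real.sqrt_sq (norm_nonneg _)]
  _ ≤ Real.sqrt ((1 - c) * ‖x‖ ^ 2) := Real.sqrt_le_sqrt hk
  _ = Real.sqrt (1 - c) * ‖x‖ := by
        rw [Real.sqrt_mul (by linarith), Real.sqrt_sq (norm_nonneg _)]

theorem Esum_apply {n : ℕ} {α : Type*} (s : Finset α) (f : α → E n) (j : Fin n) :
    (∑ i ∈ s, f i) j = ∑ i ∈ s, f i j := by
  classical
  induction s using Finset.induction with
  | empty => rfl
  | insert _ _ h ih => rw [Finset.sum_insert h, Finset.sum_insert h, ← ih]; rfl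

theorem mem_coordSubspace {n : ℕ} (I : Finset (Fin n)) (w : E n) (hw : w ∈ coordSubspace I) :
    ∀ i ∉ I, w i = 0 := by
  intro i hi
  set K : Submodule ℝ (E n) :=
    { carrier := {v : E n | v i = 0}
      add_mem' := by intro a b ha hb; simp only [Set.mem_setOf_eq] at *; simp [ha, hb]
      zero_mem' := rfl
      smul_mem' := by intro c a ha; simp only [Set.mem_setOf_eq] at *; simp [ha] } with hK
  have hle : coordSubspace I ≤ K := by
    apply Submodule.span_le.mpr
    rintro x ⟨j, hj, rfl⟩
    have : (j : Fin n) ≠ i := by rintro rfl; exact hi hj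
    simp only [SetLike.mem_coe, hK]
    show EuclideanSpace.single j (1:ℝ) i = 0
    simp [EuclideanSpace.single_apply, this, Ne.symm this]
  exact hle hw

theorem coordSubspace_mem {n : ℕ} (I : Finset (Fin n)) (w : E n) (hw : ∀ i ∉ I, w i = 0) :
    w ∈ coordSubspace I := by
  classical
  have hrep : w = ∑ i ∈ I, w i • EuclideanSpace.single i (1 : ℝ) := by
    ext j
    by_cases hj : j ∈ I
    · rw [Esum_apply]
      simp only [PiLp.smul_apply, EuclideanSpace.single_apply, smul_eq_mul]
      rw [Finset.sum_eq_single j (by intro b _ hb; simp [Ne.symm hb]) (by intro h; exact absurd hj h)]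
      simp
    · rw [Esum_apply]
      simp only [PiLp.smul_apply, EuclideanSpace.single_apply, smul_eq_mul]
      rw [hw j hj, Finset.sum_eq_zero]
      intro b hb
      have : b ≠ j := by rintro rfl; exact hj hb
      simp [Ne.symm this]
  rw [hrep]
  apply Submodule.sum_mem
  intro i hi
  exact Submodule.smul_mem _ _ (Submodule.subset_span ⟨i, hi, rfl⟩)

open Finset in
theorem projL_coord {n : ℕ} (I : Finset (Fin n)) (v : E n) :
    projL (coordSubspace I) v = ∑ i ∈ I, v i • EuclideanSpace.single i (1 : ℝ) := by
  classical
  show (coordSubspace I).starProjection v = _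
  apply Submodule.eq_starProjection_of_mem_of_inner_eq_zero
  · apply Submodule.sum_mem
    intro i hi
    exact Submodule.smul_mem _ _ (Submodule.subset_span ⟨i, hi, rfl⟩)
  · intro w hw
    have hwz := mem_coordSubspace I w hw
    have hval : ∀ j : Fin n, (v - ∑ i ∈ I, v i • EuclideanSpace.single i (1 : ℝ)) j
        = if j ∈ I then 0 else v j := by
      intro j
      have hs : (∑ i ∈ I, v i • EuclideanSpace.single i (1 : ℝ)) j
          = if j ∈ I then v j else 0 := by
        rw [Esum_apply]
        by_cases hj : j ∈ I
        · rw [Finset.sum_eq_single j (by intro b _ hb; simp [EuclideanSpace.single_apply, Ne.symm hb])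
            (by intro h; exact absurd hj h)]
          simp [EuclideanSpace.single_apply, hj]
        · rw [Finset.sum_eq_zero, if_neg hj]
          intro b hb
          have : b ≠ j := by rintro rfl; exact hj hb
          simp [EuclideanSpace.single_apply, Ne.symm this]
      show v j - (∑ i ∈ I, v i • EuclideanSpace.single i (1 : ℝ)) j = _
      rw [hs]
      by_cases hj : j ∈ I <;> simp [hj]
    rw [real_inner_comm]
    rw [real_inner_comm, PiLp.inner_apply]
    simp only [RCLike.inner_apply, conj_trivial]
    show ∑ j, w j * _ = 0
    apply Finset.sum_eq_zero
    intro j _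
    by_cases hj : j ∈ I
    · rw [hval j, if_pos hj, mul_zero]
    · rw [hwz j hj, zero_mul]

theorem enorm_sq {m : ℕ} (u : EuclideanSpace ℝ (Fin m)) : ‖u‖ ^ 2 = ∑ i, (u i) ^ 2 := by
  rw [EuclideanSpace.norm_eq, Real.sq_sqrt (by positivity)]
  exact Finset.sum_congr rfl (fun i _ => by rw [Real.norm_eq_abs, sq_abs])

theorem projL_norm_le {n : ℕ} (U : Submodule ℝ (E n)) (u : E n) : ‖projL U u‖ ≤ ‖u‖ := by
  have hmem : projL U u ∈ U := (Submodule.orthogonalProjection U u).2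
  have hfix : projL U (projL U u) = projL U u := Submodule.starProjection_eq_self_iff.mpr hmem
  have hsa : ⟪projL U u, projL U u⟫ = ⟪u, projL U (projL U u)⟫ :=
    Submodule.inner_starProjection_left_eq_right U u (projL U u)
  rw [hfix] at hsa
  by_cases hz : ‖projL U u‖ = 0
  · rw [hz]; exact norm_nonneg u
  · have h1 : ‖projL U u‖ ^ 2 ≤ ‖u‖ * ‖projL U u‖ := by
      rw [← real_inner_self_eq_norm_sq, hsa]
      exact real_inner_le_norm _ _
    have hpos : 0 < ‖projL U u‖ := lt_of_le_of_ne (norm_nonneg _) (Ne.symm hz)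
    nlinarith

open Finset in
theorem coordSum_apply {n : ℕ} (I : Finset (Fin n)) (u : Fin n → ℝ) (k : Fin n) :
    (∑ i ∈ I, u i • EuclideanSpace.single i (1 : ℝ)) k = if k ∈ I then u k else 0 := by
  classical
  rw [Esum_apply]
  by_cases hk : k ∈ I
  · rw [if_pos hk]
    rw [Finset.sum_eq_single_of_mem k hk]
    · simp [EuclideanSpace.single_apply]
    · intro b _ hb
      simp [EuclideanSpace.single_apply, Ne.symm hb]
  · rw [if_neg hk, Finset.sum_eq_zero]
    intro b hb
    have hbk : b ≠ k := by rintro rfl; exact hk hb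
    simp [EuclideanSpace.single_apply, Ne.symm hbk]

set_option maxHeartbeats 1000000

open Finset in
theorem stmt3 (n e : ℕ) (he : e ≤ n)
    (V : Submodule ℝ (E n)) (hV : Module.finrank ℝ V = e) :
    ∃ I : Finset (Fin n), I.card = e ∧
      delta V (coordSubspace I) ≤ Real.sqrt (1 - 1 / (n.choose e)) := by
  classical
  set b : OrthonormalBasis (Fin e) ℝ V := (stdOrthonormalBasis ℝ V).reindex (finCongr hV) with hbdef
  set M : Matrix (Fin n) (Fin e) ℝ := fun i j => ((b j : E n) i) with hM
  have ip : ∀ u v : E n, ⟪u, v⟫ = ∑ i, u i * v i := by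
    intro u v; simp [PiLp.inner_apply, mul_comm]
  -- helper A : the vector with coordinates x in the basis b
  have hcoe : ∀ x : EuclideanSpace ℝ (Fin e),
      ((b.repr.symm x : V) : E n) = ∑ j, x j • (b j : E n) := by
    intro x
    rw [← b.sum_repr_symm x]
    push_cast
    rfl
  have happ : ∀ (x : EuclideanSpace ℝ (Fin e)) (i : Fin n),
      ((b.repr.symm x : V) : E n) i = M.mulVec x i := by
    intro x i
    rw [hcoe, Esum_apply]
    simp only [PiLp.smul_apply, smul_eq_mul]
    rw [Matrix.mulVec]
    exact Finset.sum_congr rfl (fun j _ => mul_comm _ _)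
  have hnormb : ∀ x : EuclideanSpace ℝ (Fin e),
      ‖((b.repr.symm x : V) : E n)‖ ^ 2 = ∑ j, (x j) ^ 2 := by
    intro x
    have h1 : ‖((b.repr.symm x : V) : E n)‖ = ‖(b.repr.symm x : V)‖ := rfl
    rw [h1, LinearIsometryEquiv.norm_map, enorm_sq]
  -- Mᵀ M = 1
  have hMTM : Mᵀ * M = 1 := by
    ext j k
    have h1 : (Mᵀ * M) j k = ∑ i, (b j : E n) i * (b k : E n) i := by
      exact (Matrix.mul_apply).trans rfl
    have h2 : ⟪(b j : E n), (b k : E n)⟫ = if j = k then (1:ℝ) else 0 := by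
      rw [← Submodule.coe_inner]
      exact orthonormal_iff_ite.mp b.orthonormal j k
    rw [h1, ← ip, h2]
    simp [Matrix.one_apply]
  -- Cauchy-Binet
  have hsum := cauchyBinet M
  rw [hMTM, Matrix.det_one] at hsum
  -- choose a good subset I
  have hCpos : 0 < (n.choose e : ℝ) := by
    exact_mod_cast Nat.choose_pos he
  have hne : ((Finset.powersetCard e (univ : Finset (Fin n))).attach).Nonempty := by
    rw [Finset.attach_nonempty_iff]
    obtain ⟨s, hs⟩ := Finset.exists_subset_card_eq (by simpa using he :
      e ≤ (univ : Finset (Fin n)).card)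
    exact ⟨s, Finset.mem_powersetCard.mpr ⟨hs.1, hs.2⟩⟩
  have hcard : ((Finset.powersetCard e (univ : Finset (Fin n))).attach).card = n.choose e := by
    rw [Finset.card_attach, Finset.card_powersetCard, Finset.card_univ, Fintype.card_fin]
  obtain ⟨I, hImem, hIge⟩ : ∃ I ∈ (Finset.powersetCard e (univ : Finset (Fin n))).attach,
      1 / (n.choose e : ℝ) ≤ (subM M I.1 ((Finset.mem_powersetCard.mp I.2).2)).det ^ 2 := by
    apply Finset.exists_le_of_sum_le hne
    rw [Finset.sum_const, hcard, ← hsum, nsmul_eq_mul]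
    rw [mul_one_div, div_self (ne_of_gt hCpos)]
  set hIc := (Finset.mem_powersetCard.mp I.2).2 with hIcdef
  set N := subM M I.1 hIc with hNdef
  set c := N.det ^ 2 with hcdef
  have hc1 : c ≤ 1 := by
    have h := Finset.single_le_sum
      (f := fun J : {x // x ∈ Finset.powersetCard e (univ : Finset (Fin n))} =>
        (subM M J.1 ((Finset.mem_powersetCard.mp J.2).2)).det ^ 2)
      (fun J _ => sq_nonneg _) hImem
    rw [← hsum] at h
    exact h
  set ι := I.1.orderEmbOfFin hIc with hιdef
  -- reindexing sums over I
  have himgI : Finset.image (fun j => ι j) univ = I.1 := by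
    ext a
    simp only [Finset.mem_image, Finset.mem_univ, true_and]
    constructor
    · rintro ⟨j, rfl⟩; exact I.1.orderEmbOfFin_mem hIc _
    · intro ha
      have : a ∈ Set.range ι := by rw [hιdef, I.1.range_orderEmbOfFin hIc]; exact ha
      obtain ⟨j, hj⟩ := this
      exact ⟨j, hj⟩
  have hsumI : ∀ f : Fin n → ℝ, ∑ j, f (ι j) = ∑ i ∈ I.1, f i := by
    intro f
    rw [← himgI, Finset.sum_image (fun a _ b _ h => ι.injective h)]
  -- the submatrix as evaluation
  have hNx : ∀ (x : Fin e → ℝ) (j : Fin e), N.mulVec x j = M.mulVec x (ι j) := by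
    intro x j; rfl
  -- contraction property of N
  have hNcon : ∀ x : Fin e → ℝ, ∑ j, (N.mulVec x j) ^ 2 ≤ ∑ j, (x j) ^ 2 := by
    intro x
    set v : E n := ((b.repr.symm (WithLp.toLp 2 x) : V) : E n) with hv
    have h1 : ∑ j, (N.mulVec x j) ^ 2 = ∑ i ∈ I.1, (v i) ^ 2 := by
      rw [← hsumI (fun i => (v i) ^ 2)]
      refine Finset.sum_congr rfl (fun j _ => ?_)
      rw [hNx, hv, happ]
    rw [h1, show ∑ j, (x j) ^ 2 = ‖v‖ ^ 2 from (hnormb (WithLp.toLp 2 x)).symm, enorm_sq]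
    exact Finset.sum_le_sum_of_subset_of_nonneg (Finset.subset_univ _)
      (fun i _ _ => sq_nonneg _)
  have hcb := contraction_det_bound N hNcon
  -- inner products against the basis for vectors supported on I
  have hinnersupp : ∀ u : E n, (∀ i ∉ I.1, u i = 0) → ∀ j,
      ⟪(b j : E n), u⟫ = Nᵀ.mulVec (fun k => u (ι k)) j := by
    intro u hu j
    rw [ip]
    have h1 : ∑ i, (b j : E n) i * u i = ∑ i ∈ I.1, (b j : E n) i * u i := by
      symm
      apply Finset.sum_subset (Finset.subset_univ _)
      intro i _ hi
      rw [hu i hi, mul_zero]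
    rw [h1, ← hsumI (fun i => (b j : E n) i * u i)]
    rw [Matrix.mulVec]
    refine Finset.sum_congr rfl (fun k _ => ?_)
    show (b j : E n) (ι k) * u (ι k) = Nᵀ j k * u (ι k)
    rfl
  -- norm of the projection onto V in terms of basis coefficients
  have hprojV : ∀ u : E n, ‖projL V u‖ ^ 2 = ∑ j, (⟪(b j : E n), u⟫) ^ 2 := by
    intro u
    have h1 : projL V u = ((b.repr.symm (WithLp.toLp 2 fun j => ⟪(b j : E n), u⟫) : V) : E n) := by
      show ((V.orthogonalProjectionOnto u : V) : E n) = _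
      rw [b.orthogonalProjectionOnto_apply_eq_sum u, hcoe]
      push_cast
      rfl
    rw [h1, hnormb]
  -- the contraction property of Nᵀ
  have hNTcon : ∀ y : Fin e → ℝ, ∑ j, (Nᵀ.mulVec y j) ^ 2 ≤ ∑ j, (y j) ^ 2 := by
    intro y
    set w : E n := ∑ k, y k • EuclideanSpace.single (ι k) (1 : ℝ) with hw
    have hwval : ∀ i : Fin n, w i = ∑ k, y k * (if i = ι k then 1 else 0) := by
      intro i
      rw [hw, Esum_apply]
      refine Finset.sum_congr rfl (fun k _ => ?_)
      simp [EuclideanSpace.single_apply]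
    have hwι : ∀ k, w (ι k) = y k := by
      intro k
      rw [hwval, Finset.sum_eq_single k
        (by intro m _ hm
            have hkm : ι k ≠ ι m := fun h => hm (ι.injective h).symm
            simp [hkm])
        (by intro h; exact absurd (Finset.mem_univ k) h)]
      simp
    have hwz : ∀ i ∉ I.1, w i = 0 := by
      intro i hi
      rw [hwval, Finset.sum_eq_zero]
      intro k _
      have : i ≠ ι k := by
        rintro rfl; exact hi (I.1.orderEmbOfFin_mem hIc k)
      simp [this]
    have hwnorm : ‖w‖ ^ 2 = ∑ k, (y k) ^ 2 := by
      rw [enorm_sq]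
      have h1 : ∑ i, (w i) ^ 2 = ∑ i ∈ I.1, (w i) ^ 2 := by
        symm
        apply Finset.sum_subset (Finset.subset_univ _)
        intro i _ hi
        rw [hwz i hi]; ring
      rw [h1, ← hsumI (fun i => (w i) ^ 2)]
      exact Finset.sum_congr rfl (fun k _ => by rw [hwι])
    have h2 : ∑ j, (Nᵀ.mulVec y j) ^ 2 = ‖projL V w‖ ^ 2 := by
      rw [hprojV]
      refine Finset.sum_congr rfl (fun j _ => ?_)
      rw [hinnersupp w hwz j]
      congr 1
      refine congrArg (fun z => Nᵀ.mulVec z j) ?_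
      funext k
      rw [hwι]
    rw [h2, ← hwnorm]
    have := projL_norm_le V w
    nlinarith [norm_nonneg (projL V w), norm_nonneg w]
  have hcbT := contraction_det_bound Nᵀ hNTcon
  -- conclusion via proj_lower_bound
  refine ⟨I.1, hIc, ?_⟩
  have hdelta : delta V (coordSubspace I.1) ≤ Real.sqrt (1 - c) := by
    apply proj_lower_bound V (coordSubspace I.1) c hc1
    · -- c ‖v‖² ≤ ‖projL W v‖²
      intro v hv
      set x : EuclideanSpace ℝ (Fin e) := b.repr ⟨v, hv⟩ with hx
      have hvx : v = ((b.repr.symm x : V) : E n) := by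
        rw [hx, LinearIsometryEquiv.symm_apply_apply]
      have hnv : ‖v‖ ^ 2 = ∑ j, (x j) ^ 2 := by rw [hvx, hnormb]
      have hproj : ‖projL (coordSubspace I.1) v‖ ^ 2 = ∑ i ∈ I.1, (v i) ^ 2 := by
        rw [projL_coord I.1 v, enorm_sq]
        have h1 : ∀ i : Fin n,
            ((∑ i ∈ I.1, v i • EuclideanSpace.single i (1:ℝ)) i) ^ 2
            = if i ∈ I.1 then (v i) ^ 2 else 0 := by
          intro i
          rw [coordSum_apply]
          by_cases hi : i ∈ I.1 <;> simp [hi]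
        rw [Finset.sum_congr rfl (fun i _ => h1 i), Finset.sum_ite_mem, Finset.univ_inter]
      have h2 : ∑ i ∈ I.1, (v i) ^ 2 = ∑ j, (N.mulVec x j) ^ 2 := by
        rw [← hsumI (fun i => (v i) ^ 2)]
        refine Finset.sum_congr rfl (fun j _ => ?_)
        rw [hNx, hvx, happ]
      rw [hproj, h2, hnv]
      exact hcb x
    · -- c ‖w‖² ≤ ‖projL V w‖²
      intro w hw
      have hwz := mem_coordSubspace I.1 w hw
      set y : Fin e → ℝ := fun k => w (ι k) with hy
      have hnw : ‖w‖ ^ 2 = ∑ k, (y k) ^ 2 := by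
        rw [enorm_sq]
        have h1 : ∑ i, (w i) ^ 2 = ∑ i ∈ I.1, (w i) ^ 2 := by
          symm
          apply Finset.sum_subset (Finset.subset_univ _)
          intro i _ hi
          rw [hwz i hi]; ring
        rw [h1, ← hsumI (fun i => (w i) ^ 2)]
      have h2 : ‖projL V w‖ ^ 2 = ∑ j, (Nᵀ.mulVec y j) ^ 2 := by
        rw [hprojV]
        exact Finset.sum_congr rfl (fun j _ => by rw [hinnersupp w hwz j])
      have h3 := hcbT y
      rw [Matrix.det_transpose] at h3
      rw [h2, hnw]
      exact h3
  refine hdelta.trans (Real.sqrt_le_sqrt ?_)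
  have : 1 / (n.choose e : ℝ) ≤ c := hIge
  linarith
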